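/- arXiv:0905.1861 — 3 statements merged into one kernel-verified Lean document; each statement's English description precedes it below -/
import Mathlib

section
/- Let Ω ⊆ ℍ be an axially symmetric s-domain and let f : Ω → ℍ be slice regular. Then for any choice of J, K ∈ 𝕊 with J ≠ K, and for every q = x+yI ∈ Ω (with x, y ∈ ℝ and I ∈ 𝕊), one has f(x+yI) = (J−K)⁻¹·(J·f(x+yJ) − K·f(x+yK)) + I·(J−K)⁻¹·(f(x+yJ) − f(x+yK)). -/
open Quaternion

noncomputable section

/-- The 2-sphere of imaginary units in the quaternions. -/
def SpH : Set ℍ[ℝ] := {q | q.re = 0 ∧ ‖q‖ = 1}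

/-- The slice (complex plane) `L_I = {x + y I : x, y ∈ ℝ}`. -/
def sliceL (I : ℍ[ℝ]) : Set ℍ[ℝ] := {q | ∃ x y : ℝ, q = (x : ℍ[ℝ]) + y • I}

/-- `f` has continuous partial derivatives on the `I`-slice part of `Ω` and satisfies the
Cauchy–Riemann equation `∂f/∂x + I ∂f/∂y = 0` there. -/
def SliceHolomorphicOn (I : ℍ[ℝ]) (f : ℍ[ℝ] → ℍ[ℝ]) (Ω : Set ℍ[ℝ]) : Prop :=
  ∃ fx fy : ℝ → ℝ → ℍ[ℝ],
    (∀ x y : ℝ, (x : ℍ[ℝ]) + y • I ∈ Ω →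
      HasDerivAt (fun t : ℝ => f ((t : ℍ[ℝ]) + y • I)) (fx x y) x) ∧
    (∀ x y : ℝ, (x : ℍ[ℝ]) + y • I ∈ Ω →
      HasDerivAt (fun t : ℝ => f ((x : ℍ[ℝ]) + t • I)) (fy x y) y) ∧
    ContinuousOn (fun p : ℝ × ℝ => fx p.1 p.2) {p : ℝ × ℝ | (p.1 : ℍ[ℝ]) + p.2 • I ∈ Ω} ∧
    ContinuousOn (fun p : ℝ × ℝ => fy p.1 p.2) {p : ℝ × ℝ | (p.1 : ℍ[ℝ]) + p.2 • I ∈ Ω} ∧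
    ∀ x y : ℝ, (x : ℍ[ℝ]) + y • I ∈ Ω → fx x y + I * fy x y = 0

/-- `f` is slice regular on `Ω`. -/
def SliceRegularOn (f : ℍ[ℝ] → ℍ[ℝ]) (Ω : Set ℍ[ℝ]) : Prop :=
  ∀ I ∈ SpH, SliceHolomorphicOn I f Ω

/-- `Ω` is axially symmetric. -/
def AxSymm (Ω : Set ℍ[ℝ]) : Prop :=
  ∀ (x y : ℝ), ∀ I ∈ SpH, (x : ℍ[ℝ]) + y • I ∈ Ω → ∀ J ∈ SpH, (x : ℍ[ℝ]) + y • J ∈ Ω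

/-- `Ω` is an s-domain: a domain meeting the real axis whose slices are connected. -/
def IsSDomain (Ω : Set ℍ[ℝ]) : Prop :=
  IsOpen Ω ∧ IsConnected Ω ∧ (∃ x : ℝ, (x : ℍ[ℝ]) ∈ Ω) ∧
    ∀ I ∈ SpH, IsConnected (Ω ∩ sliceL I)

/-- The axially symmetric completion of a set `S ⊆ ℍ`. -/
def symmComp (S : Set ℍ[ℝ]) : Set ℍ[ℝ] :=
  {q | ∃ (x y : ℝ) (I : ℍ[ℝ]), I ∈ SpH ∧ q = (x : ℍ[ℝ]) + y • I ∧
    ∃ J ∈ SpH, (x : ℍ[ℝ]) + y • J ∈ S}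

/-- A domain of the slice `L_I`: a nonempty connected relatively open subset of `L_I`. -/
def IsSliceDomain (I : ℍ[ℝ]) (D : Set ℍ[ℝ]) : Prop :=
  D ⊆ sliceL I ∧ IsConnected D ∧ IsOpen {p : ℝ × ℝ | (p.1 : ℍ[ℝ]) + p.2 • I ∈ D}


open Complex Filter Asymptotics Set Metric in
lemma hasDerivAt_of_slice_partials {g gx : ℂ → ℂ} {s : Set ℂ} (hs : IsOpen s)
    (hx : ∀ z ∈ s, HasDerivAt (fun t : ℝ => g (↑t + ↑z.im * Complex.I)) (gx z) z.re)
    (hy : ∀ z ∈ s, HasDerivAt (fun t : ℝ => g (↑z.re + ↑t * Complex.I))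
      (Complex.I * gx z) z.im)
    (hc : ContinuousOn gx s) {z₀ : ℂ} (hz₀ : z₀ ∈ s) :
    HasDerivAt g (gx z₀) z₀ := by
  rw [hasDerivAt_iff_isLittleO]
  have key : (fun z : ℂ => g z - g z₀ - (z - z₀) • gx z₀)
      = (fun z : ℂ => g z - g (↑z₀.re + ↑z.im * Complex.I)
          - ((z.re - z₀.re : ℝ) : ℂ) * gx z₀)
        + fun z : ℂ => g (↑z₀.re + ↑z.im * Complex.I) - g z₀
          - ((z.im - z₀.im : ℝ) : ℂ) * (Complex.I * gx z₀) := by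
    funext z
    have hzz : z - z₀ = ((z.re - z₀.re : ℝ) : ℂ) + ((z.im - z₀.im : ℝ) : ℂ) * Complex.I := by
      simp [Complex.ext_iff]
    simp only [Pi.add_apply, smul_eq_mul, hzz]
    ring
  rw [key]
  have him_le : ∀ z : ℂ, |z.im - z₀.im| ≤ ‖z - z₀‖ := fun z => by
    simpa [Complex.sub_im] using Complex.abs_im_le_norm (z - z₀)
  have hre_le : ∀ z : ℂ, |z.re - z₀.re| ≤ ‖z - z₀‖ := fun z => by
    simpa [Complex.sub_re] using Complex.abs_re_le_norm (z - z₀)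
  apply IsLittleO.add
  · -- horizontal part via MVT
    rw [isLittleO_iff]
    intro ε hε
    have hc' : ContinuousAt gx z₀ := hc.continuousAt (hs.mem_nhds hz₀)
    rcases Metric.continuousAt_iff.1 hc' ε hε with ⟨δ₁, hδ₁, hball⟩
    rcases Metric.isOpen_iff.1 hs z₀ hz₀ with ⟨δ₂, hδ₂, hsub⟩
    set r := min δ₁ δ₂ with hrdef
    have hr : 0 < r := lt_min hδ₁ hδ₂
    filter_upwards [Metric.ball_mem_nhds z₀ (half_pos hr)] with z hz
    have hzn : ‖z - z₀‖ < r / 2 := by simpa [dist_eq] using hz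
    set w : ℝ → ℂ := fun t => ↑t + ↑z.im * Complex.I with hwdef
    have hwball : ∀ t ∈ Set.uIcc z₀.re z.re, dist (w t) z₀ < r := by
      intro t ht
      have h1 : |t - z₀.re| ≤ |z.re - z₀.re| := abs_sub_left_of_mem_uIcc ht
      have h2 : dist (w t) z₀ ≤ |t - z₀.re| + |z.im - z₀.im| := by
        have : w t - z₀ = ((t - z₀.re : ℝ) : ℂ) + ((z.im - z₀.im : ℝ) : ℂ) * Complex.I := by
          simp [hwdef, Complex.ext_iff]
        rw [dist_eq, this]
        calc ‖((t - z₀.re : ℝ) : ℂ) + ((z.im - z₀.im : ℝ) : ℂ) * Complex.I‖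
            ≤ ‖((t - z₀.re : ℝ) : ℂ)‖ + ‖((z.im - z₀.im : ℝ) : ℂ) * Complex.I‖ :=
              norm_add_le _ _
          _ = |t - z₀.re| + |z.im - z₀.im| := by
              rw [norm_mul]
              simp [Complex.norm_real, ← Complex.ofReal_sub]
      have h4 : |t - z₀.re| < r / 2 := (h1.trans (hre_le z)).trans_lt hzn
      have h5 : |z.im - z₀.im| < r / 2 := (him_le z).trans_lt hzn
      calc dist (w t) z₀ ≤ |t - z₀.re| + |z.im - z₀.im| := h2
        _ < r / 2 + r / 2 := by linarith
        _ = r := by ring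
    have hws : ∀ t ∈ Set.uIcc z₀.re z.re, w t ∈ s := fun t ht =>
      hsub (Metric.mem_ball.2 ((hwball t ht).trans_le (min_le_right _ _)))
    set φ : ℝ → ℂ := fun t => g (w t) - t • gx z₀ with hφdef
    have hφ : ∀ t ∈ Set.uIcc z₀.re z.re,
        HasDerivWithinAt φ (gx (w t) - gx z₀) (Set.uIcc z₀.re z.re) t := by
      intro t ht
      have h1 := hx (w t) (hws t ht)
      have him : (w t).im = z.im := by simp [hwdef]
      have hre : (w t).re = t := by simp [hwdef]
      rw [him, hre] at h1
      have h2 : HasDerivAt (fun τ : ℝ => τ • gx z₀) ((1 : ℝ) • gx z₀) t :=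
        (hasDerivAt_id t).smul_const _
      have := h1.sub h2
      exact (this.hasDerivWithinAt (s := Set.uIcc z₀.re z.re)).congr_deriv (by simp)
    have hbound : ∀ t ∈ Set.uIcc z₀.re z.re, ‖gx (w t) - gx z₀‖ ≤ ε := by
      intro t ht
      have := hball ((hwball t ht).trans_le (min_le_left _ _))
      rw [dist_eq_norm] at this
      exact this.le
    have hmvt := Convex.norm_image_sub_le_of_norm_hasDerivWithin_le hφ hbound
      (convex_uIcc _ _) Set.left_mem_uIcc Set.right_mem_uIcc
    have hφval : φ z.re - φ z₀.re
        = g z - g (↑z₀.re + ↑z.im * Complex.I) - ((z.re - z₀.re : ℝ) : ℂ) * gx z₀ := by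
      simp only [hφdef, hwdef, Complex.re_add_im, Complex.real_smul]
      push_cast
      ring
    rw [hφval] at hmvt
    refine hmvt.trans ?_
    have : ‖(z.re - z₀.re : ℝ)‖ ≤ ‖z - z₀‖ := by simpa [Real.norm_eq_abs] using hre_le z
    calc ε * ‖z.re - z₀.re‖ ≤ ε * ‖z - z₀‖ := by
          exact mul_le_mul_of_nonneg_left this hε.le
      _ = ε * ‖z - z₀‖ := rfl
  · -- vertical part
    have h1 := (hasDerivAt_iff_isLittleO.1 (hy z₀ hz₀))
    have h2 := h1.comp_tendsto (Complex.continuous_im.tendsto z₀)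
    have h3 : (fun z : ℂ => z.im - z₀.im) =O[nhds z₀] fun z => z - z₀ := by
      refine isBigO_of_le _ fun z => ?_
      simpa [Real.norm_eq_abs] using him_le z
    have h4 := h2.trans_isBigO h3
    refine h4.congr' ?_ (by rfl)
    filter_upwards with z
    simp [Function.comp, Complex.re_add_im, Complex.real_smul]

lemma slice_identity {U : Set ℂ} (hU : IsOpen U) (hUc : IsPreconnected U)
    {F Fx : ℂ → ℍ[ℝ]} {I : ℍ[ℝ]} (hI2 : I * I = -1)
    (hFx : ∀ z ∈ U, HasDerivAt (fun t : ℝ => F (↑t + ↑z.im * Complex.I)) (Fx z) z.re)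
    (hFy : ∀ z ∈ U, HasDerivAt (fun t : ℝ => F (↑z.re + ↑t * Complex.I)) (I * Fx z) z.im)
    (hcont : ContinuousOn Fx U)
    {x₀ : ℝ} (hx₀ : (x₀ : ℂ) ∈ U)
    (hzero : ∀ x : ℝ, (x : ℂ) ∈ U → F x = 0) :
    ∀ z ∈ U, F z = 0 := by
  -- Step 1: for every real-linear functional `λ`, the complexified function vanishes.
  have main : ∀ lam : ℍ[ℝ] →L[ℝ] ℝ, ∀ z ∈ U, lam (F z) = 0 := by
    intro lam
    set h : ℂ → ℂ := fun z => (lam (F z) : ℂ) - (lam (I * F z) : ℂ) * Complex.I with hhdef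
    set gx : ℂ → ℂ := fun z =>
      (lam (Fx z) : ℂ) - (lam (I * Fx z) : ℂ) * Complex.I with hgxdef
    have hIF : ∀ q : ℍ[ℝ], I * (I * q) = -q := fun q => by
      rw [← mul_assoc, hI2, neg_one_mul]
    have hmulI : Continuous fun q : ℍ[ℝ] => I * q := continuous_const.mul continuous_id
    -- a compositional helper
    have comp : ∀ (c : ℝ → ℂ) (d : ℍ[ℝ]) (p : ℝ),
        HasDerivAt (fun t : ℝ => F (c t)) d p →
        HasDerivAt (fun t : ℝ => h (c t))
          ((lam d : ℂ) - (lam (I * d) : ℂ) * Complex.I) p := by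
      intro c d p hd
      have h1 : HasDerivAt (fun t : ℝ => lam (F (c t))) (lam d) p :=
        lam.hasFDerivAt.comp_hasDerivAt p hd
      have hIc : HasDerivAt (fun t : ℝ => I * F (c t)) (I * d) p :=
        (((ContinuousLinearMap.mul ℝ ℍ[ℝ]) I).hasFDerivAt).comp_hasDerivAt p hd
      have h2 : HasDerivAt (fun t : ℝ => lam (I * F (c t))) (lam (I * d)) p :=
        lam.hasFDerivAt.comp_hasDerivAt p hIc
      exact (Complex.ofRealCLM.hasFDerivAt.comp_hasDerivAt p h1).sub
        ((Complex.ofRealCLM.hasFDerivAt.comp_hasDerivAt p h2).mul_const Complex.I)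
    have hx' : ∀ z ∈ U, HasDerivAt (fun t : ℝ => h (↑t + ↑z.im * Complex.I)) (gx z) z.re :=
      fun z hz => comp _ _ _ (hFx z hz)
    have hy' : ∀ z ∈ U, HasDerivAt (fun t : ℝ => h (↑z.re + ↑t * Complex.I))
        (Complex.I * gx z) z.im := by
      intro z hz
      have := comp _ _ _ (hFy z hz)
      convert this using 1
      rw [hIF]
      simp only [map_neg, hgxdef]
      push_cast
      ring_nf
      rw [Complex.I_sq]
      ring
    have hgc : ContinuousOn gx U := by
      have c1 : ContinuousOn (fun z => (lam (Fx z) : ℂ)) U :=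
        Complex.continuous_ofReal.comp_continuousOn (lam.continuous.comp_continuousOn hcont)
      have c2 : ContinuousOn (fun z => (lam (I * Fx z) : ℂ)) U :=
        Complex.continuous_ofReal.comp_continuousOn
          (lam.continuous.comp_continuousOn (hmulI.comp_continuousOn hcont))
      exact c1.sub (c2.mul continuousOn_const)
    have hdiff : DifferentiableOn ℂ h U := fun z hz =>
      (hasDerivAt_of_slice_partials hU hx' hy' hgc hz).differentiableAt.differentiableWithinAt
    have hanal : AnalyticOnNhd ℂ h U := hdiff.analyticOnNhd hU
    have hreal0 : ∀ x : ℝ, (x : ℂ) ∈ U → h x = 0 := by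
      intro x hx
      simp [hhdef, hzero x hx]
    have hfreq : ∃ᶠ z in nhdsWithin (↑x₀ : ℂ) {(↑x₀ : ℂ)}ᶜ, h z = 0 := by
      rcases Metric.isOpen_iff.1 hU _ hx₀ with ⟨ρ, hρ, hsub⟩
      rw [Filter.frequently_iff]
      intro V hV
      rcases Metric.mem_nhdsWithin_iff.1 hV with ⟨ε, hε, hsubV⟩
      set δ : ℝ := min ε ρ / 2 with hδdef
      have hδ : 0 < δ := by positivity
      have hmin1 : min ε ρ ≤ ε := min_le_left ε ρ
      have hmin2 : min ε ρ ≤ ρ := min_le_right ε ρ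
      have hδε : δ < ε := by rw [hδdef]; linarith
      have hδρ : δ < ρ := by rw [hδdef]; linarith
      have hdist : dist ((x₀ + δ : ℝ) : ℂ) ((x₀ : ℝ) : ℂ) = δ := by
        rw [Complex.dist_eq, ← Complex.ofReal_sub]
        simp [Complex.norm_real, abs_of_pos hδ]
      have hmem : ((x₀ + δ : ℝ) : ℂ) ∈ U := by
        apply hsub
        rw [Metric.mem_ball, hdist]
        exact hδρ
      refine ⟨((x₀ + δ : ℝ) : ℂ), hsubV ⟨?_, ?_⟩, hreal0 _ hmem⟩
      · rw [Metric.mem_ball, hdist]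
        exact hδε
      · simp only [Set.mem_compl_iff, Set.mem_singleton_iff]
        intro hcontra
        have : x₀ + δ = x₀ := Complex.ofReal_injective hcontra
        linarith
    have heq := hanal.eqOn_zero_of_preconnected_of_frequently_eq_zero hUc hx₀ hfreq
    intro z hz
    have := heq hz
    have hre : (h z).re = lam (F z) := by simp [hhdef]
    rw [this] at hre
    simpa using hre.symm
  -- Step 2: coordinates
  intro z hz
  have hcoord : ∀ lm : ℍ[ℝ] →ₗ[ℝ] ℝ, Continuous lm → lm (F z) = 0 := fun lm hc =>
    main ⟨lm, hc⟩ z hz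
  have h1 := hcoord (QuaternionAlgebra.reₗ _ _ _) Quaternion.continuous_re
  have h2 := hcoord (QuaternionAlgebra.imIₗ _ _ _) Quaternion.continuous_imI
  have h3 := hcoord (QuaternionAlgebra.imJₗ _ _ _) Quaternion.continuous_imJ
  have h4 := hcoord (QuaternionAlgebra.imKₗ _ _ _) Quaternion.continuous_imK
  ext
  exacts [h1, h2, h3, h4]



lemma sp_mul_self_aux {L : ℍ[ℝ]} (hL : L ∈ SpH) : L * L = -1 := by
  obtain ⟨hre, hnorm⟩ := hL
  have hstar : star L = -L := QuaternionAlgebra.star_eq_neg.2 hre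
  have h1 : L * star L = ((Quaternion.normSq L : ℝ) : ℍ[ℝ]) := Quaternion.self_mul_star L
  have h2 : Quaternion.normSq L = 1 := by
    rw [Quaternion.normSq_eq_norm_mul_self, hnorm]; norm_num
  rw [hstar, mul_neg, h2] at h1
  have h3 : -(L * L) = 1 := by simpa using h1
  have := congrArg Neg.neg h3
  simpa using this

lemma quat_alg_aux {A : Type*} [Ring A] {I J K : A} (c a b d : A)
    (hII : ∀ x : A, I * (I * x) = -x) (hJJ : ∀ x : A, J * (J * x) = -x)
    (hKK : ∀ x : A, K * (K * x) = -x) :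
    I * d - (c * (J * (J * a) - K * (K * b)) + I * (c * (J * a - K * b)))
      = I * (d - (c * (J * a - K * b) + I * (c * (a - b)))) := by
  rw [hJJ a, hKK b, mul_sub I d, mul_add I, hII (c * (a - b))]
  noncomm_ring

def eLmap (I : ℍ[ℝ]) : ℂ →ₗ[ℝ] ℍ[ℝ] where
  toFun z := ((z.re : ℝ) : ℍ[ℝ]) + z.im • I
  map_add' a b := by
    ext <;> simp [Complex.add_re, Complex.add_im] <;> ring
  map_smul' r z := by
    ext <;> simp [Complex.real_smul, Complex.mul_re, Complex.mul_im] <;> ring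

lemma eLmap_inj {I : ℍ[ℝ]} (hI : I ∈ SpH) : Function.Injective (eLmap I) := by
  rw [← LinearMap.ker_eq_bot, LinearMap.ker_eq_bot']
  intro z hz0
  have hre : z.re = 0 := by
    have := congrArg QuaternionAlgebra.re hz0
    simpa [eLmap, hI.1] using this
  have him : z.im = 0 := by
    have h1 : z.im • I = 0 := by
      have := hz0
      simp only [eLmap, LinearMap.coe_mk, AddHom.coe_mk, hre] at this
      simpa using this
    rcases smul_eq_zero.1 h1 with h | h
    · exact h
    · exfalso
      have := hI.2
      rw [h, norm_zero] at this
      norm_num at this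
  exact Complex.ext hre him

lemma preconnU {Ω : Set ℍ[ℝ]} {I : ℍ[ℝ]} (hI : I ∈ SpH)
    (hconn : IsConnected (Ω ∩ {q | ∃ x y : ℝ, q = (x : ℍ[ℝ]) + y • I})) :
    IsPreconnected {z : ℂ | ((z.re : ℝ) : ℍ[ℝ]) + z.im • I ∈ Ω} := by
  have hemb := (eLmap I).isClosedEmbedding_of_injective
    (LinearMap.ker_eq_bot.2 (eLmap_inj hI))
  have himg : (eLmap I) '' {z : ℂ | ((z.re : ℝ) : ℍ[ℝ]) + z.im • I ∈ Ω}
      = Ω ∩ {q | ∃ x y : ℝ, q = (x : ℍ[ℝ]) + y • I} := by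
    ext q
    constructor
    · rintro ⟨z, hz, rfl⟩
      exact ⟨hz, z.re, z.im, rfl⟩
    · rintro ⟨hq, a, b, rfl⟩
      exact ⟨⟨a, b⟩, hq, rfl⟩
  have h1 : IsPreconnected ((eLmap I) '' {z : ℂ | ((z.re : ℝ) : ℍ[ℝ]) + z.im • I ∈ Ω}) := by
    rw [himg]; exact hconn.isPreconnected
  exact (hemb.toIsEmbedding.toIsInducing.isPreconnected_image).1 h1

lemma creim1 (t y : ℝ) : ((t : ℂ) + (y : ℂ) * Complex.I).re = t := by simp
lemma creim2 (t y : ℝ) : ((t : ℂ) + (y : ℂ) * Complex.I).im = y := by simp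

/-- General Representation Formula. -/
theorem general_representation_formula
    (Ω : Set ℍ[ℝ]) (hΩ : IsSDomain Ω) (hax : AxSymm Ω)
    (f : ℍ[ℝ] → ℍ[ℝ]) (hf : SliceRegularOn f Ω)
    (J K : ℍ[ℝ]) (hJ : J ∈ SpH) (hK : K ∈ SpH) (hJK : J ≠ K)
    (x y : ℝ) (I : ℍ[ℝ]) (hI : I ∈ SpH) (hq : (x : ℍ[ℝ]) + y • I ∈ Ω) :
    f ((x : ℍ[ℝ]) + y • I) =
      (J - K)⁻¹ * (J * f ((x : ℍ[ℝ]) + y • J) - K * f ((x : ℍ[ℝ]) + y • K)) +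
        I * ((J - K)⁻¹ * (f ((x : ℍ[ℝ]) + y • J) - f ((x : ℍ[ℝ]) + y • K))) := by
  obtain ⟨hopen, _, ⟨x₀, hx₀Ω⟩, hslices⟩ := hΩ
  obtain ⟨fxI, fyI, hdxI, hdyI, hcxI, -, hcrI⟩ := hf I hI
  obtain ⟨fxJ, fyJ, hdxJ, hdyJ, hcxJ, -, hcrJ⟩ := hf J hJ
  obtain ⟨fxK, fyK, hdxK, hdyK, hcxK, -, hcrK⟩ := hf K hK
  have hI2 := sp_mul_self_aux hI
  have hJ2 := sp_mul_self_aux hJ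
  have hK2 := sp_mul_self_aux hK
  have hII : ∀ q : ℍ[ℝ], I * (I * q) = -q := fun q => by
    rw [← mul_assoc, hI2, neg_one_mul]
  have hJJ : ∀ q : ℍ[ℝ], J * (J * q) = -q := fun q => by
    rw [← mul_assoc, hJ2, neg_one_mul]
  have hKK : ∀ q : ℍ[ℝ], K * (K * q) = -q := fun q => by
    rw [← mul_assoc, hK2, neg_one_mul]
  set U : Set ℂ := {z : ℂ | ((z.re : ℝ) : ℍ[ℝ]) + z.im • I ∈ Ω} with hUdef
  have hUopen : IsOpen U := by
    have hcm : Continuous fun z : ℂ => ((z.re : ℝ) : ℍ[ℝ]) + z.im • I :=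
      (Quaternion.continuous_coe.comp Complex.continuous_re).add
        (Complex.continuous_im.smul continuous_const)
    exact hopen.preimage hcm
  have hUpre : IsPreconnected U := preconnU hI (hslices I hI)
  have hmemI : ∀ z ∈ U, ((z.re : ℝ) : ℍ[ℝ]) + z.im • I ∈ Ω := fun z hz => hz
  have hmemJ : ∀ z ∈ U, ((z.re : ℝ) : ℍ[ℝ]) + z.im • J ∈ Ω := fun z hz =>
    hax z.re z.im I hI hz J hJ
  have hmemK : ∀ z ∈ U, ((z.re : ℝ) : ℍ[ℝ]) + z.im • K ∈ Ω := fun z hz =>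
    hax z.re z.im I hI hz K hK
  set F : ℂ → ℍ[ℝ] := fun z =>
    f (((z.re : ℝ) : ℍ[ℝ]) + z.im • I) -
      ((J - K)⁻¹ * (J * f (((z.re : ℝ) : ℍ[ℝ]) + z.im • J)
          - K * f (((z.re : ℝ) : ℍ[ℝ]) + z.im • K)) +
        I * ((J - K)⁻¹ * (f (((z.re : ℝ) : ℍ[ℝ]) + z.im • J)
          - f (((z.re : ℝ) : ℍ[ℝ]) + z.im • K)))) with hFdef
  set Fx : ℂ → ℍ[ℝ] := fun z =>
    fxI z.re z.im -
      ((J - K)⁻¹ * (J * fxJ z.re z.im - K * fxK z.re z.im) +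
        I * ((J - K)⁻¹ * (fxJ z.re z.im - fxK z.re z.im))) with hFxdef
  have hFx : ∀ z ∈ U, HasDerivAt (fun t : ℝ => F (↑t + ↑z.im * Complex.I)) (Fx z) z.re := by
    intro z hz
    have e1 := hdxI z.re z.im (hmemI z hz)
    have e2 := hdxJ z.re z.im (hmemJ z hz)
    have e3 := hdxK z.re z.im (hmemK z hz)
    have hb := e1.sub
      ((((e2.const_mul J).sub (e3.const_mul K)).const_mul ((J - K)⁻¹)).add
        (((e2.sub e3).const_mul ((J - K)⁻¹)).const_mul I))
    have hfun : (fun t : ℝ => F (↑t + ↑z.im * Complex.I)) = fun t : ℝ =>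
        f ((t : ℍ[ℝ]) + z.im • I) -
          ((J - K)⁻¹ * (J * f ((t : ℍ[ℝ]) + z.im • J) - K * f ((t : ℍ[ℝ]) + z.im • K)) +
            I * ((J - K)⁻¹ * (f ((t : ℍ[ℝ]) + z.im • J) - f ((t : ℍ[ℝ]) + z.im • K)))) := by
      funext t
      simp only [hFdef, creim1, creim2]
    rw [hfun]
    exact hb
  have hFy : ∀ z ∈ U,
      HasDerivAt (fun t : ℝ => F (↑z.re + ↑t * Complex.I)) (I * Fx z) z.im := by
    intro z hz
    have e1 := hdyI z.re z.im (hmemI z hz)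
    have e2 := hdyJ z.re z.im (hmemJ z hz)
    have e3 := hdyK z.re z.im (hmemK z hz)
    have hb := e1.sub
      ((((e2.const_mul J).sub (e3.const_mul K)).const_mul ((J - K)⁻¹)).add
        (((e2.sub e3).const_mul ((J - K)⁻¹)).const_mul I))
    have crI : fyI z.re z.im = I * fxI z.re z.im := by
      have h := hcrI z.re z.im (hmemI z hz)
      have h2 : I * (fxI z.re z.im + I * fyI z.re z.im) = 0 := by rw [h, mul_zero]
      rw [mul_add, hII] at h2
      exact ((add_neg_eq_zero).1 h2).symm
    have crJ : fyJ z.re z.im = J * fxJ z.re z.im := by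
      have h := hcrJ z.re z.im (hmemJ z hz)
      have h2 : J * (fxJ z.re z.im + J * fyJ z.re z.im) = 0 := by rw [h, mul_zero]
      rw [mul_add, hJJ] at h2
      exact ((add_neg_eq_zero).1 h2).symm
    have crK : fyK z.re z.im = K * fxK z.re z.im := by
      have h := hcrK z.re z.im (hmemK z hz)
      have h2 : K * (fxK z.re z.im + K * fyK z.re z.im) = 0 := by rw [h, mul_zero]
      rw [mul_add, hKK] at h2
      exact ((add_neg_eq_zero).1 h2).symm
    rw [crI, crJ, crK] at hb
    have hfun : (fun t : ℝ => F (↑z.re + ↑t * Complex.I)) = fun t : ℝ =>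
        f ((z.re : ℍ[ℝ]) + t • I) -
          ((J - K)⁻¹ * (J * f ((z.re : ℍ[ℝ]) + t • J) - K * f ((z.re : ℍ[ℝ]) + t • K)) +
            I * ((J - K)⁻¹ * (f ((z.re : ℍ[ℝ]) + t • J) - f ((z.re : ℍ[ℝ]) + t • K)))) := by
      funext t
      simp only [hFdef, creim1, creim2]
    rw [hfun]
    have hval := quat_alg_aux ((J - K)⁻¹) (fxJ z.re z.im) (fxK z.re z.im) (fxI z.re z.im)
      hII hJJ hKK
    rw [hFxdef]
    rw [← hval]
    exact hb
  have hcontFx : ContinuousOn Fx U := by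
    have hmap : Continuous fun z : ℂ => (z.re, z.im) :=
      Complex.continuous_re.prodMk Complex.continuous_im
    have cI : ContinuousOn (fun z : ℂ => fxI z.re z.im) U :=
      hcxI.comp hmap.continuousOn (fun z hz => hmemI z hz)
    have cJ : ContinuousOn (fun z : ℂ => fxJ z.re z.im) U :=
      hcxJ.comp hmap.continuousOn (fun z hz => hmemJ z hz)
    have cK : ContinuousOn (fun z : ℂ => fxK z.re z.im) U :=
      hcxK.comp hmap.continuousOn (fun z hz => hmemK z hz)
    exact cI.sub (((continuousOn_const.mul
      ((continuousOn_const.mul cJ).sub (continuousOn_const.mul cK)))).add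
      (continuousOn_const.mul (continuousOn_const.mul (cJ.sub cK))))
  have hzero : ∀ t : ℝ, (t : ℂ) ∈ U → F t = 0 := by
    intro t _
    have hsm : ∀ L : ℍ[ℝ], (((t : ℂ).re : ℝ) : ℍ[ℝ]) + (t : ℂ).im • L = ((t : ℝ) : ℍ[ℝ]) := by
      intro L; simp
    simp only [hFdef, hsm]
    have h1 : J * f ((t : ℝ) : ℍ[ℝ]) - K * f ((t : ℝ) : ℍ[ℝ])
        = (J - K) * f ((t : ℝ) : ℍ[ℝ]) := by noncomm_ring
    rw [h1, sub_self, mul_zero, mul_zero, add_zero, ← mul_assoc,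
      inv_mul_cancel₀ (sub_ne_zero.2 hJK), one_mul, sub_self]
  have hx₀U : ((x₀ : ℝ) : ℂ) ∈ U := by
    show (((x₀ : ℂ).re : ℝ) : ℍ[ℝ]) + (x₀ : ℂ).im • I ∈ Ω
    simpa using hx₀Ω
  have hFzero := slice_identity hUopen hUpre hI2 hFx hFy hcontFx hx₀U hzero
  have hmemz : (⟨x, y⟩ : ℂ) ∈ U := hq
  have := hFzero ⟨x, y⟩ hmemz
  rw [hFdef] at this
  exact sub_eq_zero.1 this
end
end

section
/- Let Ω ⊆ ℍ be an axially symmetric s-domain and let f : Ω → ℍ be slice regular. For all x, y ∈ ℝ such that x+yI ∈ Ω for every I ∈ 𝕊, there exist b, c ∈ ℍ such that for every pair J, K ∈ 𝕊 with J ≠ K one has (J−K)⁻¹·(J·f(x+yJ) − K·f(x+yK)) = b and (J−K)⁻¹·(f(x+yJ) − f(x+yK)) = c. -/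
open Quaternion

noncomputable section

open Topology Filter


lemma SpH.normSq_one {I : ℍ[ℝ]} (hI : I ∈ SpH) :
    I.imI^2 + I.imJ^2 + I.imK^2 = 1 := by
  have h := hI.2
  have h2 : normSq I = 1 := by
    rw [Quaternion.normSq_eq_norm_mul_self, h]; ring
  rw [Quaternion.normSq_def'] at h2
  rw [hI.1] at h2; nlinarith [h2]

lemma SpH.mul_self {I : ℍ[ℝ]} (hI : I ∈ SpH) : I * I = -1 := by
  have h1 := hI.1
  have h2 := SpH.normSq_one hI
  ext <;> simp [Quaternion.re_mul, Quaternion.imI_mul, Quaternion.imJ_mul, Quaternion.imK_mul, h1] <;> nlinarith [h2]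

lemma SpH.neg_mem {I : ℍ[ℝ]} (hI : I ∈ SpH) : -I ∈ SpH := ⟨by simp [hI.1], by simp [hI.2]⟩

lemma SpH.i_mem : (⟨0,1,0,0⟩ : ℍ[ℝ]) ∈ SpH := by
  constructor
  · rfl
  · have key : ∀ q : ℍ[ℝ], q.re = 0 → q.imI = 1 → q.imJ = 0 → q.imK = 0 → ‖q‖ = 1 := by
      intro q h0 h1 h2 h3
      have : normSq q = 1 := by rw [Quaternion.normSq_def', h0, h1, h2, h3]; norm_num
      rw [Quaternion.normSq_eq_norm_mul_self] at this
      nlinarith [norm_nonneg q, sq_nonneg (‖q‖ - 1)]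
    exact key _ rfl rfl rfl rfl

/-- Continuous partial derivatives imply Fréchet differentiability. -/
lemma hasFDerivAt_of_partials {U : Set (ℝ × ℝ)} (hU : IsOpen U)
    {F Fx Fy : ℝ → ℝ → ℍ[ℝ]}
    (hdx : ∀ p : ℝ × ℝ, p ∈ U → HasDerivAt (fun t => F t p.2) (Fx p.1 p.2) p.1)
    (hdy : ∀ p : ℝ × ℝ, p ∈ U → HasDerivAt (fun t => F p.1 t) (Fy p.1 p.2) p.2)
    (hcx : ContinuousOn (fun p : ℝ × ℝ => Fx p.1 p.2) U)
    {p₀ : ℝ × ℝ} (hp₀ : p₀ ∈ U) :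
    HasFDerivAt (fun p : ℝ × ℝ => F p.1 p.2)
      ((ContinuousLinearMap.fst ℝ ℝ ℝ).smulRight (Fx p₀.1 p₀.2) +
       (ContinuousLinearMap.snd ℝ ℝ ℝ).smulRight (Fy p₀.1 p₀.2)) p₀ := by
  rw [hasFDerivAt_iff_isLittleO_nhds_zero, Asymptotics.isLittleO_iff]
  intro c hc
  have hε : (0:ℝ) < c/2 := by linarith
  -- continuity of Fx at p₀, and openness of U
  have hcont : ContinuousAt (fun p : ℝ × ℝ => Fx p.1 p.2) p₀ :=
    hcx.continuousAt (hU.mem_nhds hp₀)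
  obtain ⟨δ₁, hδ₁, hball⟩ := Metric.isOpen_iff.1 hU p₀ hp₀
  obtain ⟨δ₂, hδ₂, hFxcl⟩ := Metric.continuousAt_iff.1 hcont (c/2) hε
  set δ : ℝ := min δ₁ δ₂ with hδdef
  have hδ : 0 < δ := lt_min hδ₁ hδ₂
  -- the y-direction estimate
  have hy2 : ∀ᶠ b in 𝓝 (0:ℝ),
      ‖F p₀.1 (p₀.2 + b) - F p₀.1 p₀.2 - b • Fy p₀.1 p₀.2‖ ≤ c/2 * ‖b‖ :=
    Asymptotics.isLittleO_iff.1 (hasDerivAt_iff_isLittleO_nhds_zero.1 (hdy p₀ hp₀)) hε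
  have hy2' : ∀ᶠ h : ℝ × ℝ in 𝓝 0,
      ‖F p₀.1 (p₀.2 + h.2) - F p₀.1 p₀.2 - h.2 • Fy p₀.1 p₀.2‖ ≤ c/2 * ‖h.2‖ := by
    have : Filter.Tendsto (fun h : ℝ × ℝ => h.2) (𝓝 0) (𝓝 0) := by
      simpa using (continuous_snd.tendsto (0:ℝ×ℝ))
    exact this.eventually hy2
  have hsm : ∀ᶠ h : ℝ × ℝ in 𝓝 0, ‖h‖ < δ/2 := by
    have : Metric.ball (0:ℝ×ℝ) (δ/2) ∈ 𝓝 (0:ℝ×ℝ) := Metric.ball_mem_nhds _ (by linarith)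
    filter_upwards [this] with h hh
    simpa [dist_zero_right] using hh
  filter_upwards [hy2', hsm] with h hyest hhsm
  -- names
  obtain ⟨a, b⟩ := h
  simp only at hyest hhsm ⊢
  have hanorm : ‖a‖ ≤ ‖(a,b)‖ := norm_fst_le (a,b)
  have hbnorm : ‖b‖ ≤ ‖(a,b)‖ := norm_snd_le (a,b)
  -- x-direction estimate via MVT on the segment
  set s : Set ℝ := Metric.ball p₀.1 (δ/2) with hs
  have hmem : ∀ t ∈ s, ((t, p₀.2 + b) : ℝ × ℝ) ∈ Metric.ball p₀ δ := by
    intro t ht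
    rw [Metric.mem_ball] at ht ⊢
    have : dist ((t, p₀.2+b) : ℝ×ℝ) p₀ = max (dist t p₀.1) (dist (p₀.2+b) p₀.2) := rfl
    rw [this]
    have hb' : dist (p₀.2 + b) p₀.2 < δ/2 := by
      simpa [dist_eq_norm] using lt_of_le_of_lt hbnorm hhsm
    exact max_lt (lt_of_lt_of_le ht (by linarith)) (by linarith)
  have hxest : ‖F (p₀.1 + a) (p₀.2 + b) - F p₀.1 (p₀.2 + b) - a • Fx p₀.1 p₀.2‖
      ≤ c/2 * ‖(a, b)‖ := by
    have hg : ∀ t ∈ s, HasDerivWithinAt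
        (fun t => F t (p₀.2 + b) - (t - p₀.1) • Fx p₀.1 p₀.2)
        (Fx t (p₀.2 + b) - Fx p₀.1 p₀.2) s t := by
      intro t ht
      have h1 : HasDerivAt (fun t => F t (p₀.2 + b)) (Fx t (p₀.2 + b)) t := by
        have := hdx (t, p₀.2 + b) (hball (Metric.ball_subset_ball (min_le_left _ _) (hmem t ht)))
        simpa using this
      have h2 : HasDerivAt (fun t : ℝ => (t - p₀.1) • Fx p₀.1 p₀.2)
          ((1:ℝ) • Fx p₀.1 p₀.2) t :=
        ((hasDerivAt_id t).sub_const p₀.1).smul_const _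
      have h3 := (h1.sub h2).hasDerivWithinAt (s := s)
      rw [one_smul] at h3
      exact h3
    have hbound : ∀ t ∈ s, ‖Fx t (p₀.2 + b) - Fx p₀.1 p₀.2‖ ≤ c/2 := by
      intro t ht
      have hdlt : dist ((t, p₀.2+b) : ℝ×ℝ) p₀ < δ₂ :=
        lt_of_lt_of_le (Metric.mem_ball.1 (hmem t ht)) (min_le_right _ _)
      have := hFxcl hdlt
      exact le_of_lt (by simpa [dist_eq_norm] using this)
    have hx0 : p₀.1 ∈ s := Metric.mem_ball_self (by linarith)
    have hx1 : p₀.1 + a ∈ s := by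
      rw [Metric.mem_ball, dist_eq_norm]
      simpa using lt_of_le_of_lt hanorm hhsm
    have := Convex.norm_image_sub_le_of_norm_hasDerivWithin_le hg hbound (convex_ball _ _) hx0 hx1
    simp only [sub_self, zero_smul, sub_zero, add_sub_cancel_left] at this
    calc ‖F (p₀.1 + a) (p₀.2 + b) - F p₀.1 (p₀.2 + b) - a • Fx p₀.1 p₀.2‖
        = ‖(F (p₀.1 + a) (p₀.2 + b) - a • Fx p₀.1 p₀.2) - F p₀.1 (p₀.2 + b)‖ := by
          rw [sub_right_comm]
      _ ≤ c/2 * ‖a‖ := this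
      _ ≤ c/2 * ‖(a,b)‖ := by
          apply mul_le_mul_of_nonneg_left hanorm (le_of_lt hε)
  -- combine
  have lin : ((ContinuousLinearMap.fst ℝ ℝ ℝ).smulRight (Fx p₀.1 p₀.2) +
       (ContinuousLinearMap.snd ℝ ℝ ℝ).smulRight (Fy p₀.1 p₀.2)) (a, b)
      = a • Fx p₀.1 p₀.2 + b • Fy p₀.1 p₀.2 := by
    simp
  rw [lin]
  have hsplit : F (p₀.1 + a) (p₀.2 + b) - F p₀.1 p₀.2 - (a • Fx p₀.1 p₀.2 + b • Fy p₀.1 p₀.2)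
      = (F (p₀.1 + a) (p₀.2 + b) - F p₀.1 (p₀.2 + b) - a • Fx p₀.1 p₀.2)
      + (F p₀.1 (p₀.2 + b) - F p₀.1 p₀.2 - b • Fy p₀.1 p₀.2) := by abel
  calc ‖F (p₀.1 + a) (p₀.2 + b) - F p₀.1 p₀.2 - (a • Fx p₀.1 p₀.2 + b • Fy p₀.1 p₀.2)‖
      ≤ ‖F (p₀.1 + a) (p₀.2 + b) - F p₀.1 (p₀.2 + b) - a • Fx p₀.1 p₀.2‖
      + ‖F p₀.1 (p₀.2 + b) - F p₀.1 p₀.2 - b • Fy p₀.1 p₀.2‖ := by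
        rw [hsplit]; exact norm_add_le _ _
    _ ≤ c/2 * ‖(a,b)‖ + c/2 * ‖b‖ := add_le_add hxest hyest
    _ ≤ c/2 * ‖(a,b)‖ + c/2 * ‖(a,b)‖ := by
        exact add_le_add le_rfl (mul_le_mul_of_nonneg_left hbnorm (le_of_lt hε))
    _ = c * ‖(a,b)‖ := by ring

/-- The complex component map `q ↦ ⟪e,q⟫ - i ⟪e, I q⟫`. -/
def Cq (I e : ℍ[ℝ]) : ℍ[ℝ] →L[ℝ] ℂ :=
  Complex.ofRealCLM.comp (innerSL ℝ e) -
    (Complex.I • Complex.ofRealCLM).comp ((innerSL ℝ e).comp ((ContinuousLinearMap.mul ℝ ℍ[ℝ]) I))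

lemma Cq_apply (I e q : ℍ[ℝ]) :
    Cq I e q = ((inner ℝ e q : ℝ) : ℂ) - Complex.I * ((inner ℝ e (I * q) : ℝ) : ℂ) := by
  simp [Cq]

lemma Cq_re (I e q : ℍ[ℝ]) : (Cq I e q).re = (inner ℝ e q : ℝ) := by
  rw [Cq_apply]; simp

lemma Cq_mulI {I : ℍ[ℝ]} (hI : I * I = -1) (e q : ℍ[ℝ]) :
    Cq I e (I * q) = Complex.I * Cq I e q := by
  rw [Cq_apply, Cq_apply]
  have h : I * (I * q) = -q := by rw [← mul_assoc, hI]; simp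
  rw [h]
  rw [inner_neg_right]
  push_cast
  ring_nf
  rw [Complex.I_sq]
  ring

/-- Identity lemma: a slice-holomorphic function vanishing on a real segment vanishes
on a preconnected open slice set. -/
lemma slice_zero {I : ℍ[ℝ]} (hI : I * I = -1) {U : Set (ℝ × ℝ)}
    (hUo : IsOpen U) (hUc : IsPreconnected U)
    {F Fx Fy : ℝ → ℝ → ℍ[ℝ]}
    (hdx : ∀ p : ℝ × ℝ, p ∈ U → HasDerivAt (fun t => F t p.2) (Fx p.1 p.2) p.1)
    (hdy : ∀ p : ℝ × ℝ, p ∈ U → HasDerivAt (fun t => F p.1 t) (Fy p.1 p.2) p.2)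
    (hcx : ContinuousOn (fun p : ℝ × ℝ => Fx p.1 p.2) U)
    (hCR : ∀ p : ℝ × ℝ, p ∈ U → Fx p.1 p.2 + I * Fy p.1 p.2 = 0)
    {x₀ : ℝ} (h₀ : ((x₀, (0:ℝ)) : ℝ × ℝ) ∈ U) {δ : ℝ} (hδ : 0 < δ)
    (hseg : ∀ t : ℝ, |t - x₀| < δ → F t 0 = 0) :
    ∀ p ∈ U, F p.1 p.2 = 0 := by
  have hFyI : ∀ p : ℝ × ℝ, p ∈ U → Fy p.1 p.2 = I * Fx p.1 p.2 := by
    intro p hp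
    have h := hCR p hp
    have h2 : I * Fx p.1 p.2 + I * (I * Fy p.1 p.2) = 0 := by
      rw [← mul_add, h, mul_zero]
    rw [← mul_assoc, hI, neg_one_mul] at h2
    exact (add_neg_eq_zero.mp h2).symm
  set Uc : Set ℂ := {z : ℂ | ((z.re, z.im) : ℝ × ℝ) ∈ U} with hUcdef
  have hUco : IsOpen Uc := hUo.preimage (Complex.continuous_re.prodMk Complex.continuous_im)
  have hUcc : IsPreconnected Uc := by
    have heq : Uc = Complex.equivRealProdCLM.toHomeomorph ⁻¹' U := rfl
    rw [heq, Homeomorph.isPreconnected_preimage]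
    exact hUc
  intro p hp
  set e : ℍ[ℝ] := F p.1 p.2 with he
  -- the complex function
  set G : ℂ → ℂ := fun z => Cq I e (F z.re z.im) with hG
  have hdiff : DifferentiableOn ℂ G Uc := by
    intro z hz
    have hzU : ((z.re, z.im) : ℝ × ℝ) ∈ U := hz
    have hfd := hasFDerivAt_of_partials hUo hdx hdy hcx hzU
    set L := ((ContinuousLinearMap.fst ℝ ℝ ℝ).smulRight (Fx z.re z.im) +
       (ContinuousLinearMap.snd ℝ ℝ ℝ).smulRight (Fy z.re z.im)) with hL
    have hce : HasFDerivAt (fun z : ℂ => ((z.re, z.im) : ℝ × ℝ))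
        (Complex.equivRealProdCLM : ℂ →L[ℝ] ℝ × ℝ) z :=
      Complex.equivRealProdCLM.hasFDerivAt
    have hcomp1 : HasFDerivAt (fun z : ℂ => F z.re z.im)
        (L.comp (Complex.equivRealProdCLM : ℂ →L[ℝ] ℝ × ℝ)) z :=
      by have := hfd.comp z hce; exact this
    have hcomp2 : HasFDerivAt G
        ((Cq I e).comp (L.comp (Complex.equivRealProdCLM : ℂ →L[ℝ] ℝ × ℝ))) z :=
      ((Cq I e).hasFDerivAt).comp z hcomp1
    set c : ℂ := Cq I e (Fx z.re z.im) with hc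
    have hres : HasFDerivAt (𝕜 := ℂ) G (c • (1 : ℂ →L[ℂ] ℂ)) z := by
      apply hasFDerivAt_of_restrictScalars ℝ hcomp2
      apply ContinuousLinearMap.ext
      intro w
      have hLw : L ((Complex.equivRealProdCLM : ℂ →L[ℝ] ℝ × ℝ) w)
          = w.re • Fx z.re z.im + w.im • Fy z.re z.im := by
        simp [hL]
      have hLHS : ((c • (1 : ℂ →L[ℂ] ℂ)).restrictScalars ℝ) w = c * w := by
        simp
      have hRHS : ((Cq I e).comp (L.comp (Complex.equivRealProdCLM : ℂ →L[ℝ] ℝ × ℝ))) w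
          = (w.re + w.im * Complex.I) * c := by
        simp only [ContinuousLinearMap.coe_comp', Function.comp_apply]
        rw [hLw, map_add, map_smul, map_smul, hFyI _ hzU, Cq_mulI hI]
        simp only [Complex.real_smul, hc]
        ring
      rw [hLHS, hRHS, Complex.re_add_im]
      exact mul_comm _ _
    exact (hres.differentiableAt).differentiableWithinAt
  have hanal : AnalyticOnNhd ℂ G Uc := hdiff.analyticOnNhd hUco
  have hx₀Uc : (x₀ : ℂ) ∈ Uc := by
    show (((x₀ : ℂ).re, (x₀ : ℂ).im) : ℝ × ℝ) ∈ U
    simpa using h₀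
  -- frequently zero near x₀
  have hfreq : ∃ᶠ z in 𝓝[≠] (x₀ : ℂ), G z = 0 := by
    set u : ℕ → ℂ := fun n => ((x₀ + δ / 2 / (n + 1) : ℝ) : ℂ) with hu
    have h1 : Filter.Tendsto (fun n : ℕ => (x₀ + δ / 2 / (n + 1) : ℝ)) atTop (𝓝 x₀) := by
      have h2 : Filter.Tendsto (fun n : ℕ => δ / 2 / (n + 1)) atTop (𝓝 0) := by
        have := tendsto_one_div_add_atTop_nhds_zero_nat.const_mul (δ / 2)
        simpa [div_eq_mul_inv, mul_comm] using this
      simpa using tendsto_const_nhds.add h2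
    have h3 : Filter.Tendsto u atTop (𝓝[≠] (x₀ : ℂ)) := by
      apply tendsto_nhdsWithin_of_tendsto_nhds_of_eventually_within
      · exact (Complex.continuous_ofReal.tendsto x₀).comp h1
      · apply Filter.Eventually.of_forall
        intro n
        simp only [hu, Set.mem_compl_iff, Set.mem_singleton_iff]
        intro hcon
        have : (x₀ + δ / 2 / (n + 1) : ℝ) = x₀ := by exact_mod_cast hcon
        have hpos : (0:ℝ) < δ / 2 / (n + 1) := by positivity
        linarith
    apply h3.frequently
    apply Filter.Frequently.of_forall
    intro n
    have hlt : |(x₀ + δ / 2 / (n + 1) : ℝ) - x₀| < δ := by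
      have hpos : (0:ℝ) < δ / 2 / (n + 1) := by positivity
      have hle : δ / 2 / (n + 1) ≤ δ / 2 := by
        apply div_le_self (by linarith) (by push_cast; linarith [Nat.cast_nonneg (α := ℝ) n])
      rw [abs_of_pos (by linarith)]
      · linarith
    have := hseg _ hlt
    simp only [hG, hu, Complex.ofReal_re, Complex.ofReal_im]
    rw [this, map_zero]
  have hEq : Set.EqOn G 0 Uc :=
    hanal.eqOn_zero_of_preconnected_of_frequently_eq_zero hUcc hx₀Uc hfreq
  -- conclude
  have hzUc : (⟨p.1, p.2⟩ : ℂ) ∈ Uc := hp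
  have hG0 : G ⟨p.1, p.2⟩ = 0 := hEq hzUc
  have : (inner ℝ e e : ℝ) = 0 := by
    have := congrArg Complex.re hG0
    rwa [hG, Cq_re] at this
  exact inner_self_eq_zero.1 this

lemma alg_id (I Jc A B pIx pIy : ℍ[ℝ]) (hI : I * I = -1) (hJ : Jc * Jc = -1)
    (hCRI : pIx + I * pIy = 0) :
    (pIx - ((2:ℝ)⁻¹ • ((-(Jc * A)) + (-(Jc * B))) -
        I * Jc * ((2:ℝ)⁻¹ • ((-(Jc * A)) - (-(Jc * B)))))) +
      I * (pIy - ((2:ℝ)⁻¹ • (A - B) - I * Jc * ((2:ℝ)⁻¹ • (A + B)))) = 0 := by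
  have hI' : ∀ q : ℍ[ℝ], I * (I * q) = -q := fun q => by
    rw [← mul_assoc, hI, neg_one_mul]
  have hJ' : ∀ q : ℍ[ℝ], Jc * (Jc * q) = -q := fun q => by
    rw [← mul_assoc, hJ, neg_one_mul]
  have hpIx : pIx = -(I * pIy) := eq_neg_of_add_eq_zero_left hCRI
  rw [hpIx]
  simp only [smul_add, smul_sub, smul_neg, mul_neg, neg_neg, mul_add, mul_sub,
    mul_smul_comm, mul_assoc, hI', hJ']
  abel





/-- preconnectedness of the parameter set of a slice -/
lemma slice_param_preconnected (I : ℍ[ℝ]) (hI : I ∈ SpH) (Ω : Set ℍ[ℝ])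
    (hc : IsConnected (Ω ∩ sliceL I)) :
    IsPreconnected {p : ℝ × ℝ | ((p.1 : ℍ[ℝ]) + p.2 • I) ∈ Ω} := by
  set l : (ℝ × ℝ) →ₗ[ℝ] ℍ[ℝ] :=
    (LinearMap.fst ℝ ℝ ℝ).smulRight (1 : ℍ[ℝ]) + (LinearMap.snd ℝ ℝ ℝ).smulRight I with hl
  have hle : ∀ p : ℝ × ℝ, l p = (p.1 : ℍ[ℝ]) + p.2 • I := by
    intro p
    simp only [hl, LinearMap.add_apply, LinearMap.smulRight_apply, LinearMap.fst_apply,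
      LinearMap.snd_apply]
    congr 1
    rw [← Algebra.algebraMap_eq_smul_one]
    rfl
  have hInz : I ≠ 0 := by
    intro h; rw [h] at hI; simpa using hI.2
  have hinj : Function.Injective l := by
    intro p q h
    rw [hle, hle] at h
    have hre := congrArg QuaternionAlgebra.re h
    simp only [Quaternion.re_add, Quaternion.re_coe, Quaternion.re_smul, hI.1, smul_eq_mul,
      mul_zero, add_zero] at hre
    have h2 : p.2 • I = q.2 • I := by
      have := h; rw [hre] at this; exact add_left_cancel this
    have h3 : (p.2 - q.2) • I = 0 := by rw [sub_smul, h2, sub_self]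
    rcases smul_eq_zero.1 h3 with h4 | h4
    · exact Prod.ext hre (by linarith [sub_eq_zero.1 (by linarith : p.2 - q.2 = 0)])
    · exact absurd h4 hInz
  set e' := LinearEquiv.ofInjective l hinj
  have hind : Topology.IsInducing (fun p : ℝ × ℝ => (p.1 : ℍ[ℝ]) + p.2 • I) := by
    have h1 : Topology.IsInducing ((↑) : LinearMap.range l → ℍ[ℝ]) :=
      Topology.IsInducing.subtypeVal
    have h2 : Topology.IsInducing (e'.toContinuousLinearEquiv.toHomeomorph) :=
      (e'.toContinuousLinearEquiv.toHomeomorph).isInducing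
    have h3 := h1.comp h2
    have : (fun p : ℝ × ℝ => (p.1 : ℍ[ℝ]) + p.2 • I)
        = (((↑) : LinearMap.range l → ℍ[ℝ]) ∘ e'.toContinuousLinearEquiv.toHomeomorph) := by
      funext p
      simp only [Function.comp_apply]
      rw [← hle p]
      rfl
    rw [this]
    exact h3
  have him : (fun p : ℝ × ℝ => (p.1 : ℍ[ℝ]) + p.2 • I) ''
      {p : ℝ × ℝ | ((p.1 : ℍ[ℝ]) + p.2 • I) ∈ Ω} = Ω ∩ sliceL I := by
    apply Set.Subset.antisymm
    · rintro q ⟨p, hp, rfl⟩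
      exact ⟨hp, ⟨p.1, p.2, rfl⟩⟩
    · rintro q ⟨hq, ⟨a, b, rfl⟩⟩
      exact ⟨(a, b), hq, rfl⟩
  rw [← hind.isPreconnected_image, him]
  exact hc.isPreconnected

lemma half_smul (q : ℍ[ℝ]) : (2:ℝ)⁻¹ • (q + q) = q := by
  rw [← two_smul ℝ q, smul_smul]; norm_num

/-- The Representation Formula: `f (x + y I) = a + I * b` with `a, b` independent of `I`. -/
lemma rep_formula
    (Ω : Set ℍ[ℝ]) (hΩ : IsSDomain Ω) (hax : AxSymm Ω)
    (f : ℍ[ℝ] → ℍ[ℝ]) (hf : SliceRegularOn f Ω)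
    (x y : ℝ) (hxy : ∀ I ∈ SpH, (x : ℍ[ℝ]) + y • I ∈ Ω) :
    ∃ a b : ℍ[ℝ], ∀ I ∈ SpH, f ((x : ℍ[ℝ]) + y • I) = a + I * b := by
  set Jc : ℍ[ℝ] := ⟨0,1,0,0⟩ with hJcdef
  have hJc : Jc ∈ SpH := SpH.i_mem
  obtain ⟨qx, qy, hqx, hqy, hqcx, hqcy, hqCR⟩ := hf Jc hJc
  refine ⟨(2:ℝ)⁻¹ • (f ((x:ℍ[ℝ]) + y • Jc) + f ((x:ℍ[ℝ]) + (-y) • Jc)),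
      -(Jc * ((2:ℝ)⁻¹ • (f ((x:ℍ[ℝ]) + y • Jc) - f ((x:ℍ[ℝ]) + (-y) • Jc)))), ?_⟩
  intro I hI
  obtain ⟨px, py, hpx, hpy, hpcx, hpcy, hpCR⟩ := hf I hI
  set U : Set (ℝ × ℝ) := {p : ℝ × ℝ | ((p.1 : ℍ[ℝ]) + p.2 • I) ∈ Ω} with hUdef
  have hJmem : ∀ p : ℝ × ℝ, p ∈ U → ((p.1 : ℍ[ℝ]) + p.2 • Jc) ∈ Ω :=
    fun p hp => hax p.1 p.2 I hI hp Jc hJc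
  have hJmem' : ∀ p : ℝ × ℝ, p ∈ U → ((p.1 : ℍ[ℝ]) + (-p.2) • Jc) ∈ Ω := by
    intro p hp
    have := hax p.1 p.2 I hI hp (-Jc) (SpH.neg_mem hJc)
    rwa [smul_neg, ← neg_smul] at this
  set F : ℝ → ℝ → ℍ[ℝ] := fun t s => f ((t:ℍ[ℝ]) + s • I) -
      ((2:ℝ)⁻¹ • (f ((t:ℍ[ℝ]) + s • Jc) + f ((t:ℍ[ℝ]) + (-s) • Jc)) -
       I * Jc * ((2:ℝ)⁻¹ • (f ((t:ℍ[ℝ]) + s • Jc) - f ((t:ℍ[ℝ]) + (-s) • Jc)))) with hFdef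
  set Fx : ℝ → ℝ → ℍ[ℝ] := fun t s => px t s -
      ((2:ℝ)⁻¹ • (qx t s + qx t (-s)) - I * Jc * ((2:ℝ)⁻¹ • (qx t s - qx t (-s)))) with hFxdef
  set Fy : ℝ → ℝ → ℍ[ℝ] := fun t s => py t s -
      ((2:ℝ)⁻¹ • (qy t s - qy t (-s)) - I * Jc * ((2:ℝ)⁻¹ • (qy t s + qy t (-s)))) with hFydef
  have hUo : IsOpen U := by
    have hcont : Continuous (fun p : ℝ × ℝ => (p.1 : ℍ[ℝ]) + p.2 • I) :=
      (Quaternion.continuous_coe.comp continuous_fst).add (continuous_snd.smul continuous_const)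
    exact hΩ.1.preimage hcont
  have hUc : IsPreconnected U := slice_param_preconnected I hI Ω (hΩ.2.2.2 I hI)
  have hdx : ∀ p : ℝ × ℝ, p ∈ U → HasDerivAt (fun t => F t p.2) (Fx p.1 p.2) p.1 := by
    intro p hp
    have h1 := hpx p.1 p.2 hp
    have h2 := hqx p.1 p.2 (hJmem p hp)
    have h3 := hqx p.1 (-p.2) (hJmem' p hp)
    exact h1.sub (((h2.add h3).const_smul ((2:ℝ)⁻¹)).sub
      (((h2.sub h3).const_smul ((2:ℝ)⁻¹)).const_mul (I * Jc)))
  have hdy : ∀ p : ℝ × ℝ, p ∈ U → HasDerivAt (fun s => F p.1 s) (Fy p.1 p.2) p.2 := by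
    intro p hp
    have h1 := hpy p.1 p.2 hp
    have h2 := hqy p.1 p.2 (hJmem p hp)
    have h3' := hqy p.1 (-p.2) (hJmem' p hp)
    have hneg : HasDerivAt (fun s : ℝ => -s) (-1) p.2 := (hasDerivAt_id p.2).neg
    have h3 : HasDerivAt (fun s : ℝ => f ((p.1:ℍ[ℝ]) + (-s) • Jc)) (-(qy p.1 (-p.2))) p.2 := by
      have h4 := h3'.scomp p.2 hneg
      have h5 : ((fun t => f ((p.1:ℍ[ℝ]) + t • Jc)) ∘ Neg.neg : ℝ → ℍ[ℝ])
          = fun s : ℝ => f ((p.1:ℍ[ℝ]) + (-s) • Jc) := by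
        funext s; simp [Function.comp]
      rw [h5] at h4
      simpa using h4
    have hsum : HasDerivAt (fun s : ℝ => f ((p.1:ℍ[ℝ]) + s • Jc) + f ((p.1:ℍ[ℝ]) + (-s) • Jc))
        (qy p.1 p.2 - qy p.1 (-p.2)) p.2 := by
      have := h2.add h3
      rwa [← sub_eq_add_neg] at this
    have hdif : HasDerivAt (fun s : ℝ => f ((p.1:ℍ[ℝ]) + s • Jc) - f ((p.1:ℍ[ℝ]) + (-s) • Jc))
        (qy p.1 p.2 + qy p.1 (-p.2)) p.2 := by
      have := h2.sub h3
      rwa [sub_neg_eq_add] at this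
    exact h1.sub ((hsum.const_smul ((2:ℝ)⁻¹)).sub
      ((hdif.const_smul ((2:ℝ)⁻¹)).const_mul (I * Jc)))
  have hsubJ : U ⊆ {p : ℝ × ℝ | ((p.1 : ℍ[ℝ]) + p.2 • Jc) ∈ Ω} := fun p hp => hJmem p hp
  have hmapsneg : Set.MapsTo (fun p : ℝ × ℝ => (p.1, -p.2))
      U {p : ℝ × ℝ | ((p.1 : ℍ[ℝ]) + p.2 • Jc) ∈ Ω} := fun p hp => hJmem' p hp
  have hcontneg : ContinuousOn (fun p : ℝ × ℝ => (p.1, -p.2)) U :=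
    (continuous_fst.prodMk continuous_snd.neg).continuousOn
  have hcx : ContinuousOn (fun p : ℝ × ℝ => Fx p.1 p.2) U := by
    have c2 : ContinuousOn (fun p : ℝ × ℝ => qx p.1 p.2) U := hqcx.mono hsubJ
    have c3 : ContinuousOn (fun p : ℝ × ℝ => qx p.1 (-p.2)) U :=
      ContinuousOn.comp hqcx hcontneg hmapsneg
    exact (hpcx.mono (le_refl U)).sub
      ((((c2.add c3).const_smul ((2:ℝ)⁻¹)).sub
        (continuousOn_const.mul ((c2.sub c3).const_smul ((2:ℝ)⁻¹)))))
  have hCR : ∀ p : ℝ × ℝ, p ∈ U → Fx p.1 p.2 + I * Fy p.1 p.2 = 0 := by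
    intro p hp
    have hq1 : qx p.1 p.2 = -(Jc * qy p.1 p.2) :=
      eq_neg_of_add_eq_zero_left (hqCR p.1 p.2 (hJmem p hp))
    have hq2 : qx p.1 (-p.2) = -(Jc * qy p.1 (-p.2)) :=
      eq_neg_of_add_eq_zero_left (hqCR p.1 (-p.2) (hJmem' p hp))
    have hp1 : px p.1 p.2 + I * py p.1 p.2 = 0 := hpCR p.1 p.2 hp
    simp only [hFxdef, hFydef]
    rw [hq1, hq2]
    exact alg_id I Jc (qy p.1 p.2) (qy p.1 (-p.2)) (px p.1 p.2) (py p.1 p.2)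
      (SpH.mul_self hI) (SpH.mul_self hJc) hp1
  obtain ⟨x₀, hx₀Ω⟩ := hΩ.2.2.1
  have h₀ : ((x₀, (0:ℝ)) : ℝ × ℝ) ∈ U := by
    show ((x₀:ℍ[ℝ]) + (0:ℝ) • I) ∈ Ω
    simpa using hx₀Ω
  have hseg : ∀ t : ℝ, |t - x₀| < 1 → F t 0 = 0 := by
    intro t _
    simp only [hFdef, zero_smul, add_zero, neg_zero, sub_self, smul_zero, mul_zero, sub_zero]
    rw [half_smul]
    simp
  have hzero := slice_zero (SpH.mul_self hI) hUo hUc hdx hdy hcx hCR h₀ one_pos hseg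
  have hpU : ((x, y) : ℝ × ℝ) ∈ U := hxy I hI
  have hF0 := hzero (x, y) hpU
  simp only [hFdef] at hF0
  have heq := sub_eq_zero.1 hF0
  rw [heq]
  rw [mul_neg, ← mul_assoc]
  rw [sub_eq_add_neg]


/-- The two terms of the General Representation Formula do not depend on `J, K`. -/
theorem representation_formula_coefficients
    (Ω : Set ℍ[ℝ]) (hΩ : IsSDomain Ω) (hax : AxSymm Ω)
    (f : ℍ[ℝ] → ℍ[ℝ]) (hf : SliceRegularOn f Ω)
    (x y : ℝ) (hxy : ∀ I ∈ SpH, (x : ℍ[ℝ]) + y • I ∈ Ω) :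
    ∃ b c : ℍ[ℝ], ∀ J ∈ SpH, ∀ K ∈ SpH, J ≠ K →
      (J - K)⁻¹ * (J * f ((x : ℍ[ℝ]) + y • J) - K * f ((x : ℍ[ℝ]) + y • K)) = b ∧
      (J - K)⁻¹ * (f ((x : ℍ[ℝ]) + y • J) - f ((x : ℍ[ℝ]) + y • K)) = c := by
  obtain ⟨a, b, hab⟩ := rep_formula Ω hΩ hax f hf x y hxy
  refine ⟨a, b, ?_⟩
  intro J hJ K hK hne
  have hfJ := hab J hJ
  have hfK := hab K hK
  have hJK : J - K ≠ 0 := sub_ne_zero.2 hne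
  have hJ2 := SpH.mul_self hJ
  have hK2 := SpH.mul_self hK
  constructor
  · have h1 : J * f ((x : ℍ[ℝ]) + y • J) - K * f ((x : ℍ[ℝ]) + y • K) = (J - K) * a := by
      rw [hfJ, hfK, mul_add, mul_add, ← mul_assoc, ← mul_assoc, hJ2, hK2, sub_mul]
      abel
    rw [h1, inv_mul_cancel_left₀ hJK]
  · have h1 : f ((x : ℍ[ℝ]) + y • J) - f ((x : ℍ[ℝ]) + y • K) = (J - K) * b := by
      rw [hfJ, hfK, sub_mul]
      abel
    rw [h1, inv_mul_cancel_left₀ hJK]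
end
end

section
/- Let f be a slice regular function on an open set Ω ⊆ ℍ. Then for every I ∈ 𝕊 and every J ∈ 𝕊 perpendicular to I (i.e. with real inner product ⟨I, J⟩ = 0 in ℍ ≅ ℝ⁴), there exist two holomorphic functions F, G : Ω ∩ L_I → L_I such that f(z) = F(z) + G(z)·J for every z ∈ Ω ∩ L_I. -/
open Quaternion

noncomputable section

/- ### Auxiliary lemmas -/

lemma imagUnit_mul_self {I : ℍ[ℝ]} (h1 : I.re = 0) (h2 : ‖I‖ = 1) : I * I = -1 := by
  have hs : star I = -I := by ext <;> simp [h1]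
  have h3 : I * star I = ((normSq I : ℝ) : ℍ[ℝ]) := Quaternion.self_mul_star I
  have h4 : normSq I = 1 := by
    have := Quaternion.normSq_eq_norm_mul_self (a := I)
    rw [h2] at this; simpa using this
  rw [hs, h4] at h3
  have h5 : -(I * I) = 1 := by simpa using h3
  rw [← neg_neg (I * I), h5]

lemma imagUnit_anticomm {I J : ℍ[ℝ]} (h1 : I.re = 0) (hj : J.re = 0)
    (hperp : (I * star J).re = 0) : I * J = -(J * I) := by
  have hd : I.imI * J.imI + I.imJ * J.imJ + I.imK * J.imK = 0 := by
    simp [Quaternion.re_mul, h1, hj] at hperp; linarith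
  ext <;>
    simp [Quaternion.re_mul, Quaternion.imI_mul, Quaternion.imJ_mul, Quaternion.imK_mul,
      h1, hj] <;>
    nlinarith [hd]

lemma mem_sliceL_of_commute {I : ℍ[ℝ]} (h1 : I.re = 0) (h2 : ‖I‖ = 1)
    {c : ℍ[ℝ]} (hc : I * c = c * I) : c ∈ sliceL I := by
  have hn : I.imI ^ 2 + I.imJ ^ 2 + I.imK ^ 2 = 1 := by
    have h4 : normSq I = 1 := by
      have := Quaternion.normSq_eq_norm_mul_self (a := I)
      rw [h2] at this; simpa using this
    simp [Quaternion.normSq_def', h1] at h4; linarith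
  have e1 := congrArg QuaternionAlgebra.imI hc
  have e2 := congrArg QuaternionAlgebra.imJ hc
  have e3 := congrArg QuaternionAlgebra.imK hc
  simp [Quaternion.imI_mul, Quaternion.imJ_mul, Quaternion.imK_mul, h1] at e1 e2 e3
  have x1 : I.imJ * c.imK - I.imK * c.imJ = 0 := by linear_combination e1 / 2
  have x2 : I.imK * c.imI - I.imI * c.imK = 0 := by linear_combination e2 / 2
  have x3 : I.imI * c.imJ - I.imJ * c.imI = 0 := by linear_combination e3 / 2
  refine ⟨c.re, c.imI * I.imI + c.imJ * I.imJ + c.imK * I.imK, ?_⟩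
  ext
  · simp [h1]
  · simp [h1]; linear_combination -c.imI * hn - I.imJ * x3 + I.imK * x2
  · simp [h1]; linear_combination -c.imJ * hn + I.imI * x3 - I.imK * x1
  · simp [h1]; linear_combination -c.imK * hn - I.imI * x2 + I.imJ * x1

lemma crF' {R : Type*} [Ring R] (I a b : R) (h : a + I * b = 0) :
    (a - I * a * I) + I * (b - I * b * I) = 0 := by
  have ha : a = -(I * b) := (neg_eq_of_add_eq_zero_left h).symm
  subst ha; noncomm_ring

lemma crG' {R : Type*} [Ring R] (I J a b : R) (h : a + I * b = 0) :
    (a + I * a * I) * (-J) + I * ((b + I * b * I) * (-J)) = 0 := by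
  have ha : a = -(I * b) := (neg_eq_of_add_eq_zero_left h).symm
  subst ha; noncomm_ring

lemma recon' {R : Type*} [Ring R] (I J a : R) (hJJ : J * J = -1) :
    (a - I * a * I) + ((a + I * a * I) * (-J)) * J = a + a := by
  have h1 : ((a + I * a * I) * (-J)) * J = (a + I * a * I) * (-(J * J)) := by noncomm_ring
  rw [h1, hJJ]; noncomm_ring

lemma commF' {R : Type*} [Ring R] (I a : R) (hII : I * I = -1) :
    I * (a - I * a * I) = (a - I * a * I) * I := by
  have h1 : I * (a - I * a * I) = I * a - (I * I) * a * I := by noncomm_ring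
  have h2 : (a - I * a * I) * I = a * I - I * a * (I * I) := by noncomm_ring
  rw [h1, h2, hII]; noncomm_ring

lemma commG' {R : Type*} [Ring R] (I J a : R) (hII : I * I = -1) (hIJ : I * J = -(J * I)) :
    I * ((a + I * a * I) * (-J)) = ((a + I * a * I) * (-J)) * I := by
  have hL : I * ((a + I * a * I) * (-J)) = -(a * (J * I)) - I * (a * J) := by
    calc I * ((a + I * a * I) * (-J))
        = -(I * (a * J)) - ((I * I) * a) * (I * J) := by noncomm_ring
      _ = -(I * (a * J)) - ((-1 : R) * a) * (-(J * I)) := by rw [hII, hIJ]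
      _ = -(a * (J * I)) - I * (a * J) := by noncomm_ring
  have hR : ((a + I * a * I) * (-J)) * I = -(a * (J * I)) - I * (a * J) := by
    calc ((a + I * a * I) * (-J)) * I
        = -(a * (J * I)) - (I * a) * ((I * J) * I) := by noncomm_ring
      _ = -(a * (J * I)) - (I * a) * ((-(J * I)) * I) := by rw [hIJ]
      _ = -(a * (J * I)) + (I * a) * (J * (I * I)) := by noncomm_ring
      _ = -(a * (J * I)) + (I * a) * (J * (-1)) := by rw [hII]
      _ = -(a * (J * I)) - I * (a * J) := by noncomm_ring
  rw [hL, hR]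

/-- Splitting Lemma. -/
theorem splitting_lemma
    (Ω : Set ℍ[ℝ]) (hΩ : IsOpen Ω)
    (f : ℍ[ℝ] → ℍ[ℝ]) (hf : SliceRegularOn f Ω)
    (I J : ℍ[ℝ]) (hI : I ∈ SpH) (hJ : J ∈ SpH) (hperp : (I * star J).re = 0) :
    ∃ F G : ℍ[ℝ] → ℍ[ℝ],
      SliceHolomorphicOn I F (Ω ∩ sliceL I) ∧ Set.MapsTo F (Ω ∩ sliceL I) (sliceL I) ∧
      SliceHolomorphicOn I G (Ω ∩ sliceL I) ∧ Set.MapsTo G (Ω ∩ sliceL I) (sliceL I) ∧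
      ∀ z ∈ Ω ∩ sliceL I, f z = F z + G z * J := by
  obtain ⟨hIre, hInorm⟩ := hI
  obtain ⟨hJre, hJnorm⟩ := hJ
  have hII : I * I = -1 := imagUnit_mul_self hIre hInorm
  have hJJ : J * J = -1 := imagUnit_mul_self hJre hJnorm
  have hIJ : I * J = -(J * I) := imagUnit_anticomm hIre hJre hperp
  obtain ⟨fx, fy, hdx, hdy, hcx, hcy, hcr⟩ := hf I ⟨hIre, hInorm⟩
  have hsub : {p : ℝ × ℝ | (p.1 : ℍ[ℝ]) + p.2 • I ∈ Ω ∩ sliceL I} ⊆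
      {p : ℝ × ℝ | (p.1 : ℍ[ℝ]) + p.2 • I ∈ Ω} := fun p hp => hp.1
  refine ⟨fun q => (2⁻¹ : ℝ) • (f q - I * f q * I),
          fun q => (2⁻¹ : ℝ) • ((f q + I * f q * I) * (-J)), ?_, ?_, ?_, ?_, ?_⟩
  · refine ⟨fun x y => (2⁻¹ : ℝ) • (fx x y - I * fx x y * I),
            fun x y => (2⁻¹ : ℝ) • (fy x y - I * fy x y * I), ?_, ?_, ?_, ?_, ?_⟩
    · intro x y hmem
      exact ((hdx x y hmem.1).sub
        (((hdx x y hmem.1).const_mul I).mul_const I)).const_smul (2⁻¹ : ℝ)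
    · intro x y hmem
      exact ((hdy x y hmem.1).sub
        (((hdy x y hmem.1).const_mul I).mul_const I)).const_smul (2⁻¹ : ℝ)
    · have h := hcx.mono hsub
      exact (h.sub ((continuousOn_const.mul h).mul continuousOn_const)).const_smul (2⁻¹ : ℝ)
    · have h := hcy.mono hsub
      exact (h.sub ((continuousOn_const.mul h).mul continuousOn_const)).const_smul (2⁻¹ : ℝ)
    · intro x y hmem
      have h0 := hcr x y hmem.1
      show (2⁻¹ : ℝ) • (fx x y - I * fx x y * I) +
        I * ((2⁻¹ : ℝ) • (fy x y - I * fy x y * I)) = 0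
      rw [mul_smul_comm, ← smul_add, crF' I (fx x y) (fy x y) h0, smul_zero]
  · intro q hq
    apply mem_sliceL_of_commute hIre hInorm
    rw [mul_smul_comm, smul_mul_assoc, commF' I (f q) hII]
  · refine ⟨fun x y => (2⁻¹ : ℝ) • ((fx x y + I * fx x y * I) * (-J)),
            fun x y => (2⁻¹ : ℝ) • ((fy x y + I * fy x y * I) * (-J)), ?_, ?_, ?_, ?_, ?_⟩
    · intro x y hmem
      exact (((hdx x y hmem.1).add
        (((hdx x y hmem.1).const_mul I).mul_const I)).mul_const (-J)).const_smul (2⁻¹ : ℝ)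
    · intro x y hmem
      exact (((hdy x y hmem.1).add
        (((hdy x y hmem.1).const_mul I).mul_const I)).mul_const (-J)).const_smul (2⁻¹ : ℝ)
    · have h := hcx.mono hsub
      exact ((h.add ((continuousOn_const.mul h).mul continuousOn_const)).mul
        continuousOn_const).const_smul (2⁻¹ : ℝ)
    · have h := hcy.mono hsub
      exact ((h.add ((continuousOn_const.mul h).mul continuousOn_const)).mul
        continuousOn_const).const_smul (2⁻¹ : ℝ)
    · intro x y hmem
      have h0 := hcr x y hmem.1
      show (2⁻¹ : ℝ) • ((fx x y + I * fx x y * I) * (-J)) +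
        I * ((2⁻¹ : ℝ) • ((fy x y + I * fy x y * I) * (-J))) = 0
      rw [mul_smul_comm, ← smul_add, crG' I J (fx x y) (fy x y) h0, smul_zero]
  · intro q hq
    apply mem_sliceL_of_commute hIre hInorm
    rw [mul_smul_comm, smul_mul_assoc, commG' I J (f q) hII hIJ]
  · intro z hz
    have h1 : (2⁻¹ : ℝ) • (f z - I * f z * I) +
        ((2⁻¹ : ℝ) • ((f z + I * f z * I) * (-J))) * J = f z := by
      rw [smul_mul_assoc, ← smul_add, mul_assoc, ← mul_assoc]
      rw [recon' I J (f z) hJJ, ← two_smul ℝ (f z), smul_smul]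
      norm_num
    exact h1.symm
end
end
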